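/- Let σ be an alternating bilinear form on V that tames J and suppose γ(σ) = 1, i.e. α(σ) = β(σ). Then σ = c·ω for the positive constant c = α(σ). -/

import Mathlib

/-- `α(σ) = inf{σ(x,Jx) : ‖x‖ = 1}` for a bilinear form `σ` and `J : V → V`. -/
noncomputable def alphaT {V : Type*} [NormedAddCommGroup V] [InnerProductSpace ℝ V]
    (J : V → V) (σ : V →ₗ[ℝ] V →ₗ[ℝ] ℝ) : ℝ :=
  sInf {r : ℝ | ∃ x : V, ‖x‖ = 1 ∧ r = σ x (J x)}

/-- `β(σ) = sup{σ(x,y)/√(‖x‖²‖y‖² − ⟨x,y⟩²) : x, y linearly independent}`. -/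
noncomputable def betaT {V : Type*} [NormedAddCommGroup V] [InnerProductSpace ℝ V]
    (σ : V →ₗ[ℝ] V →ₗ[ℝ] ℝ) : ℝ :=
  sSup {r : ℝ | ∃ x y : V, LinearIndependent ℝ ![x, y] ∧
    r = σ x y / Real.sqrt (‖x‖ ^ 2 * ‖y‖ ^ 2 - (inner ℝ x y : ℝ) ^ 2)}

/-- `γ(σ) = α(σ)/β(σ)`. -/
noncomputable def gammaT {V : Type*} [NormedAddCommGroup V] [InnerProductSpace ℝ V]
    (J : V → V) (σ : V →ₗ[ℝ] V →ₗ[ℝ] ℝ) : ℝ :=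
  alphaT J σ / betaT σ

open scoped RealInnerProductSpace

lemma pair_li' {V : Type*} [NormedAddCommGroup V] [InnerProductSpace ℝ V]
    {u v : V} (hu : ‖u‖ = 1) (hv : ‖v‖ = 1) (huv : ⟪u, v⟫ = 0) :
    LinearIndependent ℝ ![u, v] := by
  rw [LinearIndependent.pair_iff]
  intro s t h
  have h1 : ⟪u, s • u + t • v⟫ = 0 := by rw [h, inner_zero_right]
  have h2 : ⟪v, s • u + t • v⟫ = 0 := by rw [h, inner_zero_right]
  rw [inner_add_right, real_inner_smul_right, real_inner_smul_right,
    real_inner_self_eq_norm_sq, huv] at h1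
  rw [inner_add_right, real_inner_smul_right, real_inner_smul_right,
    real_inner_self_eq_norm_sq, real_inner_comm u v, huv] at h2
  rw [hu] at h1; rw [hv] at h2
  constructor <;> nlinarith

lemma beta_bdd {V : Type*} [NormedAddCommGroup V] [InnerProductSpace ℝ V]
    [FiniteDimensional ℝ V] (σ : V →ₗ[ℝ] V →ₗ[ℝ] ℝ) (halt : ∀ x : V, σ x x = 0) :
    BddAbove {r : ℝ | ∃ x y : V, LinearIndependent ℝ ![x, y] ∧
      r = σ x y / Real.sqrt (‖x‖ ^ 2 * ‖y‖ ^ 2 - (inner ℝ x y : ℝ) ^ 2)} := by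
  classical
  let σ₁ : V →ₗ[ℝ] (V →L[ℝ] ℝ) :=
    { toFun := fun x => LinearMap.toContinuousLinearMap (σ x)
      map_add' := by intro a b; ext y; simp
      map_smul' := by intro a b; ext y; simp }
  let T : V →L[ℝ] V →L[ℝ] ℝ := LinearMap.toContinuousLinearMap σ₁
  have hbound : ∀ x y : V, |σ x y| ≤ ‖T‖ * ‖x‖ * ‖y‖ := by
    intro x y
    have h1 : ‖T x y‖ ≤ ‖T x‖ * ‖y‖ := (T x).le_opNorm y
    have h2 : ‖T x‖ ≤ ‖T‖ * ‖x‖ := T.le_opNorm x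
    have h3 : |σ x y| = ‖T x y‖ := rfl
    rw [h3]
    calc ‖T x y‖ ≤ ‖T x‖ * ‖y‖ := h1
      _ ≤ ‖T‖ * ‖x‖ * ‖y‖ := by
          have := mul_le_mul_of_nonneg_right h2 (norm_nonneg y); linarith
  refine ⟨‖T‖, ?_⟩
  rintro r ⟨x, y, hli, rfl⟩
  have hx0 : x ≠ 0 := by
    intro h
    have := (LinearIndependent.pair_iff.mp hli) 1 0 (by simp [h])
    simpa using this.1
  set a : ℝ := ⟪x, y⟫ with ha
  set y' : V := y - (a / ‖x‖ ^ 2) • x with hy'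
  have hnx : (0:ℝ) < ‖x‖ := norm_pos_iff.mpr hx0
  have hnx2 : (0:ℝ) < ‖x‖ ^ 2 := by positivity
  have hy'0 : y' ≠ 0 := by
    intro h
    have h2 : (a / ‖x‖ ^ 2) • x + (-1 : ℝ) • y = 0 := by
      rw [hy'] at h
      rw [neg_one_smul]
      rw [sub_eq_zero] at h
      rw [← h]; abel
    have := (LinearIndependent.pair_iff.mp hli) _ _ h2
    simpa using this.2
  have hny' : (0:ℝ) < ‖y'‖ := norm_pos_iff.mpr hy'0
  have hval : ‖x‖ ^ 2 * ‖y‖ ^ 2 - a ^ 2 = (‖x‖ * ‖y'‖) ^ 2 := by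
    have h1 : ‖y'‖ ^ 2 = ⟪y', y'⟫ := (real_inner_self_eq_norm_sq y').symm
    have h2 : ⟪y', y'⟫ = ‖y‖ ^ 2 - a ^ 2 / ‖x‖ ^ 2 := by
      rw [hy']
      rw [inner_sub_sub_self]
      rw [real_inner_smul_right, real_inner_smul_left, real_inner_smul_left,
        real_inner_smul_right, real_inner_self_eq_norm_sq, real_inner_self_eq_norm_sq,
        real_inner_comm x y, ← ha]
      field_simp
      ring
    have : ‖y'‖ ^ 2 = ‖y‖ ^ 2 - a ^ 2 / ‖x‖ ^ 2 := by rw [h1, h2]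
    field_simp at this ⊢
    nlinarith
  have hsig : σ x y = σ x y' := by
    rw [hy', map_sub, map_smul]
    simp [halt]
  have hD : Real.sqrt (‖x‖ ^ 2 * ‖y‖ ^ 2 - a ^ 2) = ‖x‖ * ‖y'‖ := by
    rw [hval, Real.sqrt_sq (by positivity)]
  rw [hD, hsig]
  rw [div_le_iff₀ (by positivity)]
  calc σ x y' ≤ |σ x y'| := le_abs_self _
    _ ≤ ‖T‖ * ‖x‖ * ‖y'‖ := hbound x y'
    _ = ‖T‖ * (‖x‖ * ‖y'‖) := by ring

theorem stmt13 {V : Type*} [NormedAddCommGroup V] [InnerProductSpace ℝ V]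
    [FiniteDimensional ℝ V] (hdim : 2 ≤ Module.finrank ℝ V)
    (J : V →ₗ[ℝ] V) (hiso : ∀ x : V, ‖J x‖ = ‖x‖) (hsq : ∀ x : V, J (J x) = -x)
    (σ : V →ₗ[ℝ] V →ₗ[ℝ] ℝ) (halt : ∀ x : V, σ x x = 0)
    (htame : ∀ x : V, x ≠ 0 → 0 < σ x (J x))
    (hab : alphaT (⇑J) σ = betaT σ) :
    0 < alphaT (⇑J) σ ∧ ∀ x y : V, σ x y = alphaT (⇑J) σ * (inner ℝ (J x) y : ℝ) := by
  classical
  obtain ⟨α, hα⟩ : ∃ a : ℝ, alphaT (⇑J) σ = a := ⟨_, rfl⟩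
  rw [hα] at hab ⊢
  -- J preserves inner products
  have hJJ : ∀ x y : V, ⟪J x, J y⟫ = ⟪x, y⟫ := by
    intro x y
    have := (LinearIsometry.mk J hiso).inner_map_map x y
    simpa using this
  have hskew : ∀ x y : V, ⟪J x, y⟫ = -⟪x, J y⟫ := by
    intro x y
    have : ⟪J x, J (J y)⟫ = ⟪x, J y⟫ := hJJ x (J y)
    rw [hsq, inner_neg_right] at this
    linarith
  have hxJx : ∀ x : V, ⟪x, J x⟫ = 0 := by
    intro x
    have h := hskew x x
    have h2 : ⟪J x, x⟫ = ⟪x, J x⟫ := real_inner_comm x (J x)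
    linarith
  -- σ antisymmetric
  have hanti : ∀ x y : V, σ y x = -σ x y := by
    intro x y
    have := halt (x + y)
    simp [map_add, LinearMap.add_apply, halt] at this
    linarith
  have hBdd : BddAbove {r : ℝ | ∃ x y : V, LinearIndependent ℝ ![x, y] ∧
      r = σ x y / Real.sqrt (‖x‖ ^ 2 * ‖y‖ ^ 2 - (inner ℝ x y : ℝ) ^ 2)} :=
    beta_bdd σ halt
  -- alpha set bounded below by 0
  have hBddB : BddBelow {r : ℝ | ∃ x : V, ‖x‖ = 1 ∧ r = σ x (J x)} := by
    refine ⟨0, ?_⟩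
    rintro r ⟨x, hx, rfl⟩
    exact le_of_lt (htame x (by intro h; rw [h] at hx; simp at hx))
  -- for unit u, σ u (J u) = α
  have hJu_unit : ∀ u : V, ‖u‖ = 1 → ‖J u‖ = 1 := fun u hu => by rw [hiso, hu]
  have hkey : ∀ u : V, ‖u‖ = 1 → σ u (J u) = α := by
    intro u hu
    have hle : α ≤ σ u (J u) := hα ▸ csInf_le hBddB ⟨u, hu, rfl⟩
    have hmem : σ u (J u) ∈ {r : ℝ | ∃ x y : V, LinearIndependent ℝ ![x, y] ∧
        r = σ x y / Real.sqrt (‖x‖ ^ 2 * ‖y‖ ^ 2 - (inner ℝ x y : ℝ) ^ 2)} := by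
      refine ⟨u, J u, pair_li' hu (hJu_unit u hu) (hxJx u), ?_⟩
      rw [hu, hJu_unit u hu, hxJx u]
      norm_num
    have hge : σ u (J u) ≤ betaT σ := le_csSup hBdd hmem
    rw [← hab] at hge
    linarith
  -- α > 0
  obtain ⟨x0, hx0⟩ : ∃ x0 : V, x0 ≠ 0 := by
    have : Nontrivial V := Module.nontrivial_of_finrank_pos (R := ℝ) (by omega)
    exact exists_ne 0
  set u0 : V := ‖x0‖⁻¹ • x0 with hu0
  have hu0n : ‖u0‖ = 1 := norm_smul_inv_norm (𝕜 := ℝ) hx0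
  have hu0ne : u0 ≠ 0 := by intro h; rw [h] at hu0n; simp at hu0n
  have hαpos : 0 < α := by rw [← hkey u0 hu0n]; exact htame u0 hu0ne
  -- σ u z = 0 for z orthogonal to u and J u
  have horth : ∀ u z : V, ‖u‖ = 1 → ‖z‖ = 1 → ⟪u, z⟫ = 0 → ⟪J u, z⟫ = 0 → σ u z = 0 := by
    intro u z hu hz h1 h2
    set s : ℝ := σ u z with hs
    set r : ℝ := Real.sqrt (α ^ 2 + s ^ 2) with hr
    have hrpos : 0 < r := Real.sqrt_pos.mpr (by positivity)
    set w : V := α • J u + s • z with hw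
    have hwn : ‖w‖ ^ 2 = r ^ 2 := by
      rw [Real.sq_sqrt (by positivity)]
      rw [← real_inner_self_eq_norm_sq, hw]
      rw [inner_add_add_self]
      simp only [real_inner_smul_left, real_inner_smul_right]
      rw [real_inner_comm (J u) z, h2, real_inner_self_eq_norm_sq,
        real_inner_self_eq_norm_sq, hJu_unit u hu, hz]
      ring
    set v : V := r⁻¹ • w with hv
    have hwr : ‖w‖ = r := by nlinarith [norm_nonneg w, hrpos, hwn]
    have hvn : ‖v‖ = 1 := by
      rw [hv, norm_smul, hwr, Real.norm_eq_abs, abs_inv, abs_of_pos hrpos,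
        inv_mul_cancel₀ hrpos.ne']
    have huv : ⟪u, v⟫ = 0 := by
      rw [hv, real_inner_smul_right, hw, inner_add_right, real_inner_smul_right,
        real_inner_smul_right, hxJx u, h1]
      ring
    have hrr : r * r = α ^ 2 + s ^ 2 := by
      rw [hr]; exact Real.mul_self_sqrt (by positivity)
    have hσuv : σ u v = r := by
      have e : σ u w = r * r := by
        rw [hw, map_add, map_smul, map_smul]
        simp only [smul_eq_mul]
        rw [hkey u hu, ← hs]
        nlinarith [hrr]
      have e2 : σ u v = r⁻¹ * (r * r) := by
        rw [hv, map_smul, smul_eq_mul, e]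
      rw [e2]; field_simp
    have hge : σ u v ≤ betaT σ :=
      le_csSup hBdd ⟨u, v, pair_li' hu hvn huv, by rw [hu, hvn, huv]; norm_num⟩
    rw [← hab, hσuv] at hge
    have h5 : r ^ 2 ≤ α ^ 2 := pow_le_pow_left₀ hrpos.le hge 2
    have hr2 : r ^ 2 = α ^ 2 + s ^ 2 := Real.sq_sqrt (by positivity)
    have h7 : s ^ 2 = 0 := le_antisymm (by linarith) (sq_nonneg s)
    exact sq_eq_zero_iff.mp h7
  -- conclusion
  refine ⟨hαpos, ?_⟩
  -- first for unit u
  have hmain : ∀ u : V, ‖u‖ = 1 → ∀ y : V, σ u y = α * ⟪J u, y⟫ := by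
    intro u hu y
    set b : ℝ := ⟪J u, y⟫ with hb
    set aa : ℝ := ⟪u, y⟫ with haa
    set z : V := y - aa • u - b • J u with hz
    have hz1 : ⟪u, z⟫ = 0 := by
      rw [hz, inner_sub_right, inner_sub_right, real_inner_smul_right,
        real_inner_smul_right, real_inner_self_eq_norm_sq, hu, hxJx u]
      ring
    have hz2 : ⟪J u, z⟫ = 0 := by
      rw [hz, inner_sub_right, inner_sub_right, real_inner_smul_right,
        real_inner_smul_right, real_inner_self_eq_norm_sq, hJu_unit u hu,
        real_inner_comm u (J u), hxJx u]
      ring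
    have hσz : σ u z = 0 := by
      by_cases hz0 : z = 0
      · rw [hz0]; simp
      · have hnz : (0:ℝ) < ‖z‖ := norm_pos_iff.mpr hz0
        have h1 : ‖(‖z‖⁻¹ • z)‖ = 1 := norm_smul_inv_norm (𝕜 := ℝ) hz0
        have h2 : ⟪u, ‖z‖⁻¹ • z⟫ = 0 := by rw [real_inner_smul_right, hz1]; ring
        have h3 : ⟪J u, ‖z‖⁻¹ • z⟫ = 0 := by rw [real_inner_smul_right, hz2]; ring
        have := horth u (‖z‖⁻¹ • z) hu h1 h2 h3
        rw [map_smul] at this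
        simp only [smul_eq_mul] at this
        have : ‖z‖⁻¹ * σ u z = 0 := this
        field_simp at this
        simpa using this
    have hydecomp : y = aa • u + b • J u + z := by rw [hz]; abel
    rw [hydecomp, map_add, map_add, map_smul, map_smul]
    simp only [smul_eq_mul]
    rw [halt u, hkey u hu, hσz]
    ring
  intro x y
  by_cases hx : x = 0
  · rw [hx, map_zero, map_zero]
    simp only [LinearMap.zero_apply, inner_zero_left, mul_zero]
  · have hnx : (0:ℝ) < ‖x‖ := norm_pos_iff.mpr hx
    set u : V := ‖x‖⁻¹ • x with hu
    have hun : ‖u‖ = 1 := norm_smul_inv_norm (𝕜 := ℝ) hx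
    have h1 := hmain u hun y
    rw [hu, map_smul] at h1
    simp only [LinearMap.smul_apply, smul_eq_mul, map_smul, real_inner_smul_left] at h1
    field_simp at h1 ⊢
    linarith
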